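/- Call an n×n matrix S over 𝔽₂ skew-upper triangular if S_{ij} = 0 whenever i + j > n + 1 (all entries strictly below the antidiagonal vanish). Then every matrix M ∈ GLₙ(𝔽₂) is conjugate in GLₙ(𝔽₂) to a product S₁ · S₂ · U, where S₁ and S₂ are skew-upper triangular and U is upper triangular. -/
import Mathlib

open Matrix

namespace Stmt4Aux

abbrev F := ZMod 2

lemma F_ne_zero : ∀ {x : F}, x ≠ 0 → x = 1 := by decide

lemma F_add_self : ∀ x : F, x + x = 0 := by decide

/-- upper triangular -/
def Up {m : ℕ} (A : Matrix (Fin m) (Fin m) F) : Prop := ∀ i j, j < i → A i j = 0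
/-- lower triangular -/
def Lo {m : ℕ} (A : Matrix (Fin m) (Fin m) F) : Prop := ∀ i j, i < j → A i j = 0

lemma Up.mul {m} {A B : Matrix (Fin m) (Fin m) F} (hA : Up A) (hB : Up B) :
    Up (A * B) := by
  intro i j h
  rw [Matrix.mul_apply]
  apply Finset.sum_eq_zero
  intro k _
  rcases lt_or_ge k i with hk | hk
  · rw [hA i k hk, zero_mul]
  · rw [hB k j (lt_of_lt_of_le h hk), mul_zero]

lemma Lo.mul {m} {A B : Matrix (Fin m) (Fin m) F} (hA : Lo A) (hB : Lo B) :
    Lo (A * B) := by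
  intro i j h
  rw [Matrix.mul_apply]
  apply Finset.sum_eq_zero
  intro k _
  rcases lt_or_ge i k with hk | hk
  · rw [hA i k hk, zero_mul]
  · rw [hB k j (lt_of_le_of_lt hk h), mul_zero]

lemma Up.one {m} : Up (1 : Matrix (Fin m) (Fin m) F) := by
  intro i j h
  exact Matrix.one_apply_ne (ne_of_gt h)

lemma Lo.one {m} : Lo (1 : Matrix (Fin m) (Fin m) F) := by
  intro i j h
  exact Matrix.one_apply_ne (ne_of_lt h)


/-- matrix supported on row 0 -/
def rz {m : ℕ} (v : Fin (m+1) → F) : Matrix (Fin (m+1)) (Fin (m+1)) F :=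
  Matrix.of fun a b => if a = 0 then v b else 0

/-- row-operation gadget: adds `v`-combination of rows to row 0 (or of columns to column ?) -/
def G {m : ℕ} (v : Fin (m+1) → F) : Matrix (Fin (m+1)) (Fin (m+1)) F :=
  1 + rz v

lemma rz_mul_rz {m : ℕ} {v w : Fin (m+1) → F} (hv : v 0 = 0) :
    rz v * rz w = 0 := by
  ext a b
  rw [Matrix.mul_apply]
  simp only [rz, Matrix.of_apply, Matrix.zero_apply]
  apply Finset.sum_eq_zero
  intro k _
  by_cases ha : a = 0
  · by_cases hk : k = 0
    · simp [ha, hk, hv]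
    · simp [ha, hk]
  · simp [ha]

lemma G_mul_G {m : ℕ} {v : Fin (m+1) → F} (hv : v 0 = 0) :
    G v * G v = 1 := by
  have h2 : rz v + rz v = 0 := by
    ext a b; exact F_add_self _
  calc G v * G v = 1 + (rz v + rz v) + rz v * rz v := by rw [G]; noncomm_ring
    _ = 1 := by rw [h2, rz_mul_rz hv, add_zero, add_zero]

lemma G_isUnit {m : ℕ} {v : Fin (m+1) → F} (hv : v 0 = 0) : IsUnit (G v) :=
  ⟨⟨G v, G v, G_mul_G hv, G_mul_G hv⟩, rfl⟩

lemma Up.G {m : ℕ} (v : Fin (m+1) → F) : Up (G v) := by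
  intro i j h
  have hi : i ≠ 0 := by
    intro h0
    rw [h0] at h
    exact absurd h (by simp)
  simp [Stmt4Aux.G, rz, Matrix.add_apply, Matrix.one_apply_ne (ne_of_gt h), hi]

lemma G_mul_apply_zero {m : ℕ} (v : Fin (m+1) → F) (M : Matrix (Fin (m+1)) (Fin (m+1)) F)
    (b : Fin (m+1)) : (G v * M) 0 b = M 0 b + ∑ k, v k * M k b := by
  rw [G, add_mul, one_mul, Matrix.add_apply, Matrix.mul_apply]
  simp [rz]

lemma G_mul_apply_succ {m : ℕ} (v : Fin (m+1) → F) (M : Matrix (Fin (m+1)) (Fin (m+1)) F)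
    (a b : Fin (m+1)) (ha : a ≠ 0) : (G v * M) a b = M a b := by
  rw [G, add_mul, one_mul, Matrix.add_apply]
  have : rz v * M = Matrix.of fun a b => if a = 0 then ∑ k, v k * M k b else 0 := by
    ext x y
    rw [Matrix.mul_apply]
    by_cases hx : x = 0 <;> simp [rz, hx]
  rw [this]
  simp [ha]

lemma mul_G_apply {m : ℕ} (w : Fin (m+1) → F) (M : Matrix (Fin (m+1)) (Fin (m+1)) F)
    (a b : Fin (m+1)) : (M * G w) a b = M a b + M a 0 * w b := by
  rw [G, mul_add, mul_one, Matrix.add_apply]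
  congr 1
  rw [Matrix.mul_apply]
  rw [Finset.sum_eq_single 0]
  · simp [rz]
  · intro k _ hk; simp [rz, hk]
  · simp


/-- extend an `m × m` matrix to `(m+1) × (m+1)` with first row `(1,0,…,0)` and
first column `(1, c)`. -/
def liftM {m : ℕ} (A : Matrix (Fin m) (Fin m) F) (c : Fin m → F) :
    Matrix (Fin (m+1)) (Fin (m+1)) F :=
  Matrix.of (Fin.cons (Fin.cons 1 0) fun i => Fin.cons (c i) (A i))

@[simp] lemma liftM_zero_zero {m} (A : Matrix (Fin m) (Fin m) F) (c) :
    liftM A c 0 0 = 1 := rfl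
@[simp] lemma liftM_zero_succ {m} (A : Matrix (Fin m) (Fin m) F) (c) (j : Fin m) :
    liftM A c 0 j.succ = 0 := by simp [liftM]
@[simp] lemma liftM_succ_zero {m} (A : Matrix (Fin m) (Fin m) F) (c) (i : Fin m) :
    liftM A c i.succ 0 = c i := by simp [liftM]
@[simp] lemma liftM_succ_succ {m} (A : Matrix (Fin m) (Fin m) F) (c) (i j : Fin m) :
    liftM A c i.succ j.succ = A i j := by simp [liftM]

lemma liftM_mul {m} (A B : Matrix (Fin m) (Fin m) F) (c d : Fin m → F) :
    liftM A c * liftM B d = liftM (A * B) (c + A.mulVec d) := by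
  ext a b
  rw [Matrix.mul_apply]
  refine Fin.cases ?_ ?_ a <;> [skip; intro i] <;> refine Fin.cases ?_ ?_ b <;>
    try intro j
  · simp [Fin.sum_univ_succ]
  · simp [Fin.sum_univ_succ]
  · simp [Fin.sum_univ_succ, Matrix.mulVec, dotProduct]
  · simp [Fin.sum_univ_succ, Matrix.mul_apply]

lemma Up.liftM {m} {A : Matrix (Fin m) (Fin m) F} (hA : Up A) :
    Up (liftM A 0) := by
  intro a b h
  refine Fin.cases ?_ ?_ a (motive := fun a => ∀ b : Fin (m+1), b < a → Stmt4Aux.liftM A 0 a b = 0) b h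
  · intro b hb; exact absurd hb (by simp)
  · intro i b hb
    refine Fin.cases ?_ ?_ b (motive := fun b => b < i.succ → Stmt4Aux.liftM A 0 i.succ b = 0) hb
    · intro _; simp
    · intro j hj
      rw [liftM_succ_succ]
      exact hA i j (by exact_mod_cast Fin.succ_lt_succ_iff.mp hj)

lemma Lo.liftM {m} {A : Matrix (Fin m) (Fin m) F} (hA : Lo A) (c : Fin m → F) :
    Lo (liftM A c) := by
  intro a b h
  refine Fin.cases ?_ ?_ a (motive := fun a => ∀ b : Fin (m+1), a < b → Stmt4Aux.liftM A c a b = 0) b h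
  · intro b hb
    refine Fin.cases ?_ ?_ b (motive := fun b => (0:Fin (m+1)) < b → Stmt4Aux.liftM A c 0 b = 0) hb
    · intro h0; exact absurd h0 (lt_irrefl _)
    · intro j _; simp
  · intro i b hb
    refine Fin.cases ?_ ?_ b (motive := fun b => i.succ < b → Stmt4Aux.liftM A c i.succ b = 0) hb
    · intro h0; exact absurd h0 (Fin.not_lt_zero _)
    · intro j hj
      rw [liftM_succ_succ]
      exact hA i j (Fin.succ_lt_succ_iff.mp hj)

lemma isUnit_of_liftM {m} {A : Matrix (Fin m) (Fin m) F} {c : Fin m → F}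
    (h : IsUnit (liftM A c)) : IsUnit A := by
  rw [Matrix.isUnit_iff_isUnit_det] at h ⊢
  rw [Matrix.det_succ_row_zero] at h
  rw [Fin.sum_univ_succ] at h
  simp only [liftM_zero_succ, mul_zero, zero_mul, Finset.sum_const_zero, add_zero,
    liftM_zero_zero, Fin.val_zero, pow_zero, one_mul, mul_one] at h
  have : ((liftM A c).submatrix Fin.succ (Fin.succAbove 0)) = A := by
    ext i j
    rw [Matrix.submatrix_apply, Fin.succAbove_zero]
    simp
  rwa [this] at h


set_option maxHeartbeats 1000000 in
lemma ULU : ∀ (m : ℕ) (M : Matrix (Fin m) (Fin m) F), IsUnit M →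
    ∃ U₁ L U₂, Up U₁ ∧ Lo L ∧ Up U₂ ∧ M = U₁ * L * U₂ := by
  intro m
  induction m with
  | zero =>
    intro M _
    exact ⟨1, 1, 1, Up.one, Lo.one, Up.one, by ext i; exact i.elim0⟩
  | succ m ih =>
    intro M hM
    -- column 0 is nonzero
    have hcol : ∃ i, M i 0 ≠ 0 := by
      by_contra hc
      push_neg at hc
      rw [Matrix.isUnit_iff_isUnit_det, Matrix.det_succ_column_zero] at hM
      simp [hc] at hM
    obtain ⟨i, hi⟩ := hcol
    -- a row operation making the (0,0) entry equal to 1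
    have hT : ∃ v : Fin (m+1) → F, v 0 = 0 ∧ (G v * M) 0 0 = 1 := by
      by_cases h00 : M 0 0 = 0
      · have hi0 : i ≠ 0 := fun h => hi (h ▸ h00)
        refine ⟨Pi.single i 1, by simp [Pi.single_eq_of_ne (Ne.symm hi0)], ?_⟩
        rw [G_mul_apply_zero, h00, zero_add]
        rw [Finset.sum_eq_single i (fun k _ hk => by simp [Pi.single_eq_of_ne hk])
          (by simp)]
        rw [Pi.single_eq_same, one_mul]
        exact F_ne_zero hi
      · exact ⟨0, rfl, by rw [G_mul_apply_zero]; simp [F_ne_zero h00]⟩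
    obtain ⟨v, hv0, h100⟩ := hT
    set M₁ := G v * M with hM₁def
    -- a column operation clearing row 0
    set w : Fin (m+1) → F := fun b => if b = 0 then 0 else M₁ 0 b with hwdef
    have hw0 : w 0 = 0 := by simp [hwdef]
    set M₂ := M₁ * G w with hM₂def
    have hrow0 : M₂ 0 0 = 1 := by
      rw [hM₂def, mul_G_apply, hwdef]
      simp [h100]
    have hrow : ∀ j : Fin m, M₂ 0 j.succ = 0 := by
      intro j
      rw [hM₂def, mul_G_apply, h100, one_mul, hwdef]
      simp only [Fin.succ_ne_zero, if_false]
      exact F_add_self _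
    -- M₂ is a unit
    have hM₂unit : IsUnit M₂ := ((G_isUnit hv0).mul hM).mul (G_isUnit hw0)
    -- split off the lower-right block
    set A := M₂.submatrix Fin.succ Fin.succ with hAdef
    set c : Fin m → F := fun k => M₂ k.succ 0 with hcdef
    have hM₂lift : M₂ = liftM A c := by
      ext a b
      refine Fin.cases ?_ ?_ a <;> [skip; intro i'] <;> refine Fin.cases ?_ ?_ b <;>
        try intro j'
      · rw [hrow0, liftM_zero_zero]
      · rw [hrow, liftM_zero_succ]
      · rw [liftM_succ_zero]
      · rw [liftM_succ_succ, hAdef, Matrix.submatrix_apply]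
    have hAunit : IsUnit A := isUnit_of_liftM (hM₂lift ▸ hM₂unit)
    obtain ⟨U₁', L', U₂', hU₁, hL, hU₂, hA⟩ := ih A hAunit
    -- U₁' is a unit
    have hU₁unit : IsUnit U₁'.det := by
      have : IsUnit A.det := (Matrix.isUnit_iff_isUnit_det A).mp hAunit
      rw [hA, Matrix.det_mul, Matrix.det_mul] at this
      exact isUnit_of_mul_isUnit_left (isUnit_of_mul_isUnit_left this)
    set c₂ := (U₁'⁻¹).mulVec c with hc₂def
    have hc : U₁'.mulVec c₂ = c := by
      rw [hc₂def, Matrix.mulVec_mulVec, Matrix.mul_nonsing_inv _ hU₁unit,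
        Matrix.one_mulVec]
    refine ⟨G v * liftM U₁' 0, liftM L' c₂, liftM U₂' 0 * G w,
      (Up.G v).mul hU₁.liftM, hL.liftM c₂, hU₂.liftM.mul (Up.G w), ?_⟩
    have key : liftM U₁' 0 * liftM L' c₂ * liftM U₂' 0 = M₂ := by
      rw [liftM_mul, liftM_mul, Matrix.mulVec_zero, zero_add, add_zero, hc, ← hA]
      exact hM₂lift.symm
    have hfix : G v * M₂ * G w = M := by
      rw [hM₂def, hM₁def]
      rw [← mul_assoc (G v) (G v * M) (G w), ← mul_assoc (G v) (G v) M,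
        G_mul_G hv0, one_mul, mul_assoc M (G w) (G w), G_mul_G hw0, mul_one]
    calc M = G v * M₂ * G w := hfix.symm
      _ = G v * (liftM U₁' 0 * liftM L' c₂ * liftM U₂' 0) * G w := by rw [key]
      _ = G v * liftM U₁' 0 * liftM L' c₂ * (liftM U₂' 0 * G w) := by
          simp only [mul_assoc]

/-- the antidiagonal flip matrix -/
def Flip {m : ℕ} : Matrix (Fin m) (Fin m) F :=
  Matrix.of fun i j => if j = i.rev then 1 else 0

lemma J_mul_J {m : ℕ} : (Flip : Matrix (Fin m) (Fin m) F) * Flip = 1 := by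
  ext i j
  rw [Matrix.mul_apply, Finset.sum_eq_single i.rev]
  · simp only [Flip, Matrix.of_apply, if_pos rfl, one_mul, Fin.rev_rev]
    rw [Matrix.one_apply]
    by_cases h : i = j <;> simp [h, eq_comm]
  · intro k _ hk
    simp [Flip, hk]
  · simp

lemma mul_J_skew {m : ℕ} {U : Matrix (Fin m) (Fin m) F} (hU : Up U) :
    ∀ i j : Fin m, m ≤ i.val + j.val → ((U * Flip : Matrix (Fin m) (Fin m) F)) i j = 0 := by
  intro i j h
  have hentry : ((U * Flip : Matrix (Fin m) (Fin m) F)) i j = U i j.rev := by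
    rw [Matrix.mul_apply, Finset.sum_eq_single j.rev]
    · simp [Flip, Fin.rev_rev]
    · intro k _ hk
      have : j ≠ k.rev := fun he => hk (by rw [he, Fin.rev_rev])
      simp [Flip, this]
    · simp
  rw [hentry]
  apply hU
  rw [Fin.lt_def, Fin.val_rev]
  have := i.isLt
  have := j.isLt
  omega

lemma J_mul_skew {m : ℕ} {L : Matrix (Fin m) (Fin m) F} (hL : Lo L) :
    ∀ i j : Fin m, m ≤ i.val + j.val → ((Flip * L : Matrix (Fin m) (Fin m) F)) i j = 0 := by
  intro i j h
  have hentry : ((Flip * L : Matrix (Fin m) (Fin m) F)) i j = L i.rev j := by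
    rw [Matrix.mul_apply, Finset.sum_eq_single i.rev]
    · simp [Flip]
    · intro k _ hk
      simp [Flip, hk]
    · simp
  rw [hentry]
  apply hL
  rw [Fin.lt_def, Fin.val_rev]
  have := i.isLt
  have := j.isLt
  omega

end Stmt4Aux

open Stmt4Aux in
/-- Every `M ∈ GLₙ(𝔽₂)` is conjugate to a product `S₁ · S₂ · U` with
`S₁, S₂` skew-upper triangular (entries strictly below the antidiagonal vanish,
i.e. `S i j = 0` whenever `i.val + j.val ≥ n` in 0-based indexing) and `U` upper
triangular. -/
theorem stmt4 (n : ℕ) (M : Matrix (Fin n) (Fin n) (ZMod 2)) (hM : IsUnit M) :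
    ∃ P S₁ S₂ U : Matrix (Fin n) (Fin n) (ZMod 2),
      IsUnit P ∧
      (∀ i j : Fin n, n ≤ i.val + j.val → S₁ i j = 0) ∧
      (∀ i j : Fin n, n ≤ i.val + j.val → S₂ i j = 0) ∧
      (∀ i j : Fin n, j < i → U i j = 0) ∧
      P * M * P⁻¹ = S₁ * S₂ * U := by
  obtain ⟨U₁, L, U₂, hU₁, hL, hU₂, hdec⟩ := ULU n M hM
  refine ⟨1, U₁ * Flip, Flip * L, U₂, isUnit_one, mul_J_skew hU₁, J_mul_skew hL, hU₂, ?_⟩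
  rw [inv_one, one_mul, mul_one, hdec]
  have h2 : U₁ * Flip * (Flip * L) * U₂ = U₁ * (Flip * Flip) * L * U₂ := by
    simp only [mul_assoc]
  rw [h2, J_mul_J, mul_one]
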